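/- Let G be a finite group, p the smallest prime divisor of |G|, and suppose there exists x ∉ Z(G) with C_G^⊗(x) ≠ C_G(x). Then d^⊗(G) ≤ d(G) − (1 − 1/p)·(|Z(G)| − |Z^⊗(G)| − 1)/|G|. -/

import Mathlib

open scoped commutatorElement

/-- Sharpened upper bound (Proposition 3.3): let `G` be a finite group, `p` the smallest
prime divisor of `|G|`, and suppose there is `x ∉ Z(G)` with `C_G^⊗(x) ≠ C_G(x)`. Then
`d⊗(G) ≤ d(G) − (1 − 1/p)(|Z(G)| − |Z⊗(G)| − 1)/|G|`. The tensor square is modelled by a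
group `T`, a pairing `t`, the commutator homomorphism `κ`, with tensor centralizers
being subgroups of the centralizers, conjugation invariance, and the index bound
`|G : C_G^⊗(x)| ≥ p` for `x ∉ Z⊗(G)`. -/
theorem tensor_degree_sharp_upper_bound
    {G T : Type*} [Group G] [Fintype G] [Group T]
    (t : G → G → T) (κ : T →* G)
    (hκ : ∀ a b : G, κ (t a b) = ⁅a, b⁆)
    (hconj : ∀ g a x : G, t a x = 1 ↔ t (g⁻¹ * a * g) (g⁻¹ * x * g) = 1)
    (p : ℕ) (hp : p.Prime) (hdvd : p ∣ Fintype.card G)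
    (hmin : ∀ q : ℕ, q.Prime → q ∣ Fintype.card G → p ≤ q)
    (C : G → Subgroup G) (hC : ∀ x a : G, a ∈ C x ↔ t a x = 1)
    (hCle : ∀ x : G, C x ≤ Subgroup.centralizer {x})
    (hindex : ∀ x : G, (¬ ∀ y : G, t x y = 1) → p * Nat.card (C x) ≤ Fintype.card G)
    (x : G) (hx : x ∉ Subgroup.center G) (hxC : C x ≠ Subgroup.centralizer {x}) :
    (Nat.card {q : G × G // t q.1 q.2 = 1} : ℝ) / (Fintype.card G : ℝ) ^ 2 ≤
      (Nat.card {q : G × G // Commute q.1 q.2} : ℝ) / (Fintype.card G : ℝ) ^ 2 -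
        (1 - 1 / (p : ℝ)) *
          (((Nat.card (Subgroup.center G) : ℝ) -
            (Nat.card {g : G // ∀ y : G, t g y = 1} : ℝ) - 1) / (Fintype.card G : ℝ)) := by
  classical
  set n := Fintype.card G with hn
  have hn0 : 0 < (n : ℝ) := by exact_mod_cast Fintype.card_pos
  have hp0 : 0 < (p : ℝ) := by exact_mod_cast hp.pos
  have h1p : 0 ≤ 1 - 1 / (p : ℝ) := by
    have : (1 : ℝ) ≤ p := by exact_mod_cast hp.one_lt.le
    have := div_le_one_of_le₀ this (le_of_lt hp0)
    linarith
  -- counting pairs by the second coordinate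
  have key : ∀ P : G → G → Prop,
      Nat.card {q : G × G // P q.1 q.2} = ∑ y : G, Nat.card {a : G // P a y} := by
    intro P
    have e : {q : G × G // P q.1 q.2} ≃ Σ y : G, {a : G // P a y} :=
      ((Equiv.prodComm G G).subtypeEquiv (fun q => Iff.rfl)).trans
        (Equiv.subtypeProdEquivSigmaSubtype fun y a => P a y)
    rw [Nat.card_congr e]
    simp [Nat.card_eq_fintype_card]
  have hTens : Nat.card {q : G × G // t q.1 q.2 = 1} = ∑ y : G, Nat.card (C y) :=
    (key fun a b => t a b = 1).trans (Finset.sum_congr rfl fun y _ =>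
      Nat.card_congr (Equiv.subtypeEquivRight fun a => (hC y a).symm))
  have hComm : Nat.card {q : G × G // Commute q.1 q.2}
      = ∑ y : G, Nat.card (Subgroup.centralizer ({y} : Set G)) := by
    refine (key Commute).trans (Finset.sum_congr rfl fun y _ =>
      Nat.card_congr (Equiv.subtypeEquivRight fun a => ?_))
    simp [Subgroup.mem_centralizer_iff, Commute, SemiconjBy, eq_comm]
  -- tensor center is contained in the center
  have hZT : ∀ g : G, (∀ y : G, t g y = 1) → g ∈ Subgroup.center G := by
    intro g h
    rw [Subgroup.mem_center_iff]
    intro y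
    have h1 : κ (t g y) = ⁅g, y⁆ := hκ g y
    rw [h y, map_one] at h1
    have := commutatorElement_eq_one_iff_mul_comm.mp h1.symm
    rw [this]
  -- the set of central, non-tensor-central elements
  set S : Finset G :=
    Finset.univ.filter (fun g => g ∈ Subgroup.center G ∧ ¬ ∀ y : G, t g y = 1) with hS
  set A : Finset G := Finset.univ.filter (fun g => g ∈ Subgroup.center G) with hA
  set B : Finset G := Finset.univ.filter (fun g => ∀ y : G, t g y = 1) with hB
  have hBA : B ⊆ A := by
    intro g hg
    simp only [hA, hB, Finset.mem_filter, Finset.mem_univ, true_and] at *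
    exact hZT g hg
  have hSAB : S = A \ B := by
    ext g
    simp [hS, hA, hB, Finset.mem_sdiff]
  have hAcard : A.card = Nat.card (Subgroup.center G) := by
    rw [Nat.card_eq_fintype_card, hA, ← Fintype.card_subtype]
  have hBcard : B.card = Nat.card {g : G // ∀ y : G, t g y = 1} := by
    rw [Nat.card_eq_fintype_card, hB, ← Fintype.card_subtype]
  have hScard : (S.card : ℝ) = (Nat.card (Subgroup.center G) : ℝ)
      - (Nat.card {g : G // ∀ y : G, t g y = 1} : ℝ) := by
    rw [hSAB, Finset.card_sdiff_of_subset hBA, Nat.cast_sub (Finset.card_le_card hBA), hAcard, hBcard]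
  -- main summation inequality
  have main : (∑ y : G, (Nat.card (C y) : ℝ)) + S.card * ((n : ℝ) - n / p)
      ≤ ∑ y : G, (Nat.card (Subgroup.centralizer ({y} : Set G)) : ℝ) := by
    have hterm : ∀ y : G, (Nat.card (C y) : ℝ) + (if y ∈ S then (n : ℝ) - n / p else 0)
        ≤ (Nat.card (Subgroup.centralizer ({y} : Set G)) : ℝ) := by
      intro y
      by_cases hyS : y ∈ S
      · rw [if_pos hyS]
        simp only [hS, Finset.mem_filter, Finset.mem_univ, true_and] at hyS
        obtain ⟨hyZ, hyT⟩ := hyS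
        have h1 : (Nat.card (C y) : ℝ) ≤ (n : ℝ) / p := by
          rw [le_div_iff₀ hp0]
          have := hindex y hyT
          calc (Nat.card (C y) : ℝ) * p = ((p * Nat.card (C y) : ℕ) : ℝ) := by
                push_cast; ring
            _ ≤ n := by exact_mod_cast this
        have h2 : (Nat.card (Subgroup.centralizer ({y} : Set G)) : ℝ) = n := by
          have htop : Subgroup.centralizer ({y} : Set G) = ⊤ := by
            rw [eq_top_iff]
            intro a _
            rw [Subgroup.mem_centralizer_iff]
            intro g hg
            rw [Set.mem_singleton_iff] at hg
            subst hg
            exact (Subgroup.mem_center_iff.mp hyZ a).symm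
          rw [htop]
          norm_cast
          rw [Subgroup.card_top, Nat.card_eq_fintype_card]
        
        linarith
      · rw [if_neg hyS, add_zero]
        exact_mod_cast Subgroup.card_le_of_le (hCle y)
    calc (∑ y : G, (Nat.card (C y) : ℝ)) + S.card * ((n : ℝ) - n / p)
        = ∑ y : G, ((Nat.card (C y) : ℝ) + (if y ∈ S then (n : ℝ) - n / p else 0)) := by
          rw [Finset.sum_add_distrib]
          congr 1
          rw [Finset.sum_ite_mem, Finset.univ_inter, Finset.sum_const, nsmul_eq_mul]
      _ ≤ _ := Finset.sum_le_sum fun y _ => hterm y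
  -- assemble
  rw [hTens, hComm]
  push_cast
  set SA : ℝ := ∑ y : G, (Nat.card (C y) : ℝ)
  set SB : ℝ := ∑ y : G, (Nat.card (Subgroup.centralizer ({y} : Set G)) : ℝ)
  set Z : ℝ := (Nat.card (Subgroup.center G) : ℝ)
  set Tc : ℝ := (Nat.card {g : G // ∀ y : G, t g y = 1} : ℝ)
  have hmain' : SA + (S.card : ℝ) * ((n : ℝ) * (1 - 1 / p)) ≤ SB := by
    have : (n : ℝ) * (1 - 1 / p) = (n : ℝ) - n / p := by ring
    rw [this]; exact main
  have hB2 : (1 - 1 / (p : ℝ)) * ((Z - Tc - 1) / n) ≤ (1 - 1 / (p : ℝ)) * ((S.card : ℝ) / n) := by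
    apply mul_le_mul_of_nonneg_left _ h1p
    apply div_le_div_of_nonneg_right _ (le_of_lt hn0)
    rw [hScard]; linarith
  have h2 : SA / (n : ℝ) ^ 2 + (1 - 1 / (p : ℝ)) * ((S.card : ℝ) / n) ≤ SB / (n : ℝ) ^ 2 := by
    have heq : SA / (n : ℝ) ^ 2 + (1 - 1 / (p : ℝ)) * ((S.card : ℝ) / n)
        = (SA + (S.card : ℝ) * ((n : ℝ) * (1 - 1 / p))) / (n : ℝ) ^ 2 := by
      field_simp
    rw [heq]
    exact div_le_div_of_nonneg_right hmain' (by positivity)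
  linarith
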